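/- Let v_1, ..., v_r in R^{r-1} be vectors whose only linear dependences are scalar multiples of v_1 + ... + v_r = 0. Let X_1, ..., X_r be finite disjoint sets in R^d, and for x in X_j define the tensor x-bar = v_j tensor (x,1) in R^{(r-1)(d+1)}. Then the intersection of the convex hulls of X_1, ..., X_r is nonempty if and only if the origin lies in the convex hull of the set of all tensors x-bar. -/

import Mathlib

/-- The lift of x ∈ ℝ^d to (x, 1) ∈ ℝ^{d+1}. -/
def liftOne (d : ℕ) (x : Fin d → ℝ) : Fin (d + 1) → ℝ :=
  fun k => if h : (k : ℕ) < d then x ⟨k, h⟩ else 1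

/-- The Sarkaria tensor v_j ⊗ (x, 1), viewed as a vector in ℝ^{(r-1)(d+1)} indexed by
pairs. -/
def sarkariaTensor (d r : ℕ) (v : Fin r → (Fin (r - 1) → ℝ)) (j : Fin r)
    (x : Fin d → ℝ) : Fin (r - 1) × Fin (d + 1) → ℝ :=
  fun p => v j p.1 * liftOne d x p.2

/-- Sarkaria's tensor criterion: with v_1, ..., v_r ∈ ℝ^{r-1} whose only linear
dependences are multiples of v_1 + ⋯ + v_r = 0, and finite pairwise disjoint sets
X_1, ..., X_r ⊆ ℝ^d, the convex hulls of the X_j have a common point iff the origin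
lies in the convex hull of all tensors v_j ⊗ (x, 1), x ∈ X_j. -/
theorem sarkaria_criterion (d r : ℕ) (hr : 2 ≤ r)
    (v : Fin r → (Fin (r - 1) → ℝ))
    (hsum : ∑ j, v j = 0)
    (hdep : ∀ c : Fin r → ℝ, ∑ j, c j • v j = 0 → ∀ j k, c j = c k)
    (X : Fin r → Finset (Fin d → ℝ))
    (hdisj : ∀ j k : Fin r, j ≠ k → Disjoint (X j) (X k)) :
    (⋂ j, convexHull ℝ ((X j : Set (Fin d → ℝ)))).Nonempty ↔
      (0 : Fin (r - 1) × Fin (d + 1) → ℝ) ∈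
        convexHull ℝ {t | ∃ j, ∃ x ∈ X j, t = sarkariaTensor d r v j x} := by
  have hrpos : (0 : ℝ) < (r : ℝ) := by exact_mod_cast Nat.lt_of_lt_of_le Nat.zero_lt_two hr
  constructor
  · -- forward direction
    rintro ⟨p, hp⟩
    simp only [Set.mem_iInter] at hp
    have hmem : ∀ j, ∃ w : (Fin d → ℝ) → ℝ, (∀ y ∈ X j, 0 ≤ w y) ∧
        ∑ y ∈ X j, w y = 1 ∧ ∑ y ∈ X j, w y • y = p := fun j =>
      Finset.mem_convexHull'.1 (hp j)
    choose w hw0 hw1 hwp using hmem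
    have key : ∀ j m, ∑ y ∈ X j, w j y * liftOne d y m = liftOne d p m := by
      intro j m
      by_cases h : (m : ℕ) < d
      · have := congrFun (hwp j) ⟨m, h⟩
        simp only [Finset.sum_apply, Pi.smul_apply, smul_eq_mul] at this
        simpa [liftOne, h] using this
      · simp [liftOne, h, hw1 j]
    have hzero : ∑ q ∈ (Finset.univ.sigma fun j => X j), w q.1 q.2 •
        sarkariaTensor d r v q.1 q.2 = 0 := by
      funext pm
      obtain ⟨q, m⟩ := pm
      simp only [Finset.sum_apply, Pi.smul_apply, smul_eq_mul, Pi.zero_apply,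
        Finset.sum_sigma, sarkariaTensor]
      have : ∀ j : Fin r, ∑ y ∈ X j, w j y * (v j q * liftOne d y m)
          = v j q * liftOne d p m := by
        intro j
        rw [← key j m, Finset.mul_sum]
        exact Finset.sum_congr rfl fun y _ => by ring
      rw [Finset.sum_congr rfl fun j _ => this j, ← Finset.sum_mul]
      have h0 : ∑ j : Fin r, v j q = 0 := by
        have := congrFun hsum q
        simpa [Finset.sum_apply] using this
      rw [h0, zero_mul]
    have hsumw : ∑ q ∈ (Finset.univ.sigma fun j => X j), w q.1 q.2 = (r : ℝ) := by
      rw [Finset.sum_sigma]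
      simp [hw1]
    have := Finset.centerMass_mem_convexHull (Finset.univ.sigma fun j => X j)
      (w := fun q => w q.1 q.2) (fun q hq => hw0 q.1 q.2 (by
        simpa using (Finset.mem_sigma.1 hq).2))
      (by rw [hsumw]; exact hrpos)
      (z := fun q => sarkariaTensor d r v q.1 q.2)
      (s := {t | ∃ j, ∃ x ∈ X j, t = sarkariaTensor d r v j x})
      (fun q hq => ⟨q.1, q.2, by simpa using (Finset.mem_sigma.1 hq).2, rfl⟩)
    rwa [Finset.centerMass, hzero, smul_zero] at this
  · -- backward direction
    intro h0
    rw [convexHull_eq] at h0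
    obtain ⟨ι, t, w, z, hw0, hw1, hzS, hcm⟩ := h0
    have hz' : ∀ i : {x // x ∈ t}, ∃ j, ∃ x ∈ X j, z i.1 = sarkariaTensor d r v j x :=
      fun i => hzS i.1 i.2
    choose J Y hYmem hzeq using hz'
    -- the combination at coordinate level
    have hcm' : ∑ i ∈ t.attach, w i.1 • z i.1 = 0 := by
      rw [Finset.sum_attach t (fun i => w i • z i)]
      rw [Finset.centerMass_eq_of_sum_1 _ _ hw1] at hcm
      exact hcm
    set u : Fin r → Fin (d + 1) → ℝ := fun j m =>
      ∑ i ∈ t.attach, if J i = j then w i.1 * liftOne d (Y i) m else 0 with hu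
    have hequal : ∀ j k : Fin r, u j = u k := by
      intro j k
      funext m
      refine hdep (fun j => u j m) ?_ j k
      funext q
      simp only [Finset.sum_apply, Pi.smul_apply, smul_eq_mul, Pi.zero_apply, hu]
      have swap : ∑ j : Fin r, (∑ i ∈ t.attach,
            if J i = j then w i.1 * liftOne d (Y i) m else 0) * v j q
          = ∑ i ∈ t.attach, w i.1 * (v (J i) q * liftOne d (Y i) m) := by
        calc ∑ j : Fin r, (∑ i ∈ t.attach,
              if J i = j then w i.1 * liftOne d (Y i) m else 0) * v j q
            = ∑ j : Fin r, ∑ i ∈ t.attach,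
              (if J i = j then w i.1 * (v j q * liftOne d (Y i) m) else 0) := by
              refine Finset.sum_congr rfl fun j _ => ?_
              rw [Finset.sum_mul]
              refine Finset.sum_congr rfl fun i _ => ?_
              split_ifs <;> ring
          _ = ∑ i ∈ t.attach, ∑ j : Fin r,
              (if J i = j then w i.1 * (v j q * liftOne d (Y i) m) else 0) :=
              Finset.sum_comm
          _ = ∑ i ∈ t.attach, w i.1 * (v (J i) q * liftOne d (Y i) m) := by
              refine Finset.sum_congr rfl fun i _ => ?_
              rw [Finset.sum_ite_eq]
              simp
      rw [swap]
      have := congrFun hcm' (q, m)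
      simp only [Finset.sum_apply, Pi.smul_apply, smul_eq_mul, Pi.zero_apply] at this
      rw [← this]
      refine Finset.sum_congr rfl fun i _ => ?_
      rw [hzeq i]
      rfl
    -- weights per class
    have hulast : ∀ j, u j (Fin.last d) = ∑ i ∈ t.attach, if J i = j then w i.1 else 0 := by
      intro j
      refine Finset.sum_congr rfl fun i _ => ?_
      have : liftOne d (Y i) (Fin.last d) = 1 := by simp [liftOne]
      rw [this]
      by_cases hj : J i = j <;> simp [hj]
    have hsumlast : ∑ j : Fin r, u j (Fin.last d) = 1 := by
      rw [Finset.sum_congr rfl fun j _ => hulast j, Finset.sum_comm]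
      rw [← Finset.sum_attach t w] at hw1
      rw [← hw1]
      refine Finset.sum_congr rfl fun i _ => ?_
      rw [Finset.sum_ite_eq]
      simp
    obtain ⟨j0, _⟩ : ∃ j0 : Fin r, True := ⟨⟨0, by omega⟩, trivial⟩
    set s : ℝ := u j0 (Fin.last d) with hs
    have hrs : (r : ℝ) * s = 1 := by
      rw [← hsumlast]
      rw [Finset.sum_congr rfl fun j _ => (congrFun (hequal j j0) (Fin.last d))]
      simp [mul_comm]
      exact Or.inl hs
    have hspos : 0 < s := by nlinarith
    -- the common point
    set p : Fin d → ℝ := fun m => s⁻¹ * u j0 (Fin.castSucc m) with hp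
    refine ⟨p, Set.mem_iInter.2 fun j => ?_⟩
    have hsumfil : ∑ i ∈ t.attach.filter (fun i => J i = j), w i.1 = s := by
      rw [Finset.sum_filter, hs, congrFun (hequal j0 j) (Fin.last d), hulast j]
    have hcmass : (t.attach.filter (fun i => J i = j)).centerMass
        (fun i => w i.1) (fun i => Y i) = p := by
      rw [Finset.centerMass, hsumfil]
      funext m
      simp only [Finset.sum_apply, Pi.smul_apply, smul_eq_mul, hp]
      congr 1
      rw [Finset.sum_filter, congrFun (hequal j0 j) (Fin.castSucc m)]
      show _ = ∑ i ∈ t.attach, if J i = j then w i.1 * liftOne d (Y i) (Fin.castSucc m) else 0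
      refine Finset.sum_congr rfl fun i _ => ?_
      have hlt : ((Fin.castSucc m : Fin (d+1)) : ℕ) < d := m.2
      have hY : liftOne d (Y i) (Fin.castSucc m) = Y i m := by
        simp only [liftOne, hlt, dif_pos]
        congr 1
      rw [hY]
    rw [← hcmass]
    refine Finset.centerMass_mem_convexHull _ (fun i _ => hw0 i.1 i.2) ?_ ?_
    · rw [hsumfil]; exact hspos
    · intro i hi
      have hji : J i = j := (Finset.mem_filter.1 hi).2
      simpa [hji] using hYmem i
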